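/- Assume f satisfies (f_reg), (f_eq), (f_0), and that R1 > 0. Then every solution u of the Cauchy problem with datum d > 0 on [R1,R2] satisfies H(r) ≥ F̂(d) · exp((N-1) p' (R1 - R2)/R1) for every r ∈ [R1,R2]. If moreover F_∞ := lim_{s→∞} F̂(s) = +∞, then for every M > 0 there exists D > 0 such that for every d ≥ D, every solution u of the Cauchy problem with datum d, and every r ∈ [R1, r1], one has u(r) + |u'(r)| ≥ M. -/

import Mathlib

open Real Set Filter Topology

noncomputable def phip (p s : ℝ) : ℝ := |s| ^ (p - 2) * s

def Freg (f : ℝ → ℝ) : Prop :=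
  ContinuousOn f (Ici 0) ∧ ContDiffOn ℝ 1 f (Ioi 0)

def Feq (f : ℝ → ℝ) : Prop :=
  f 0 = 0 ∧ f 1 = 0 ∧ (∀ s : ℝ, 0 < s → s < 1 → f s < 0) ∧ (∀ s : ℝ, 1 < s → 0 < f s)

def Fzero (p : ℝ) (f : ℝ → ℝ) : Prop :=
  ∃ c : ℝ, ∀ᶠ s in 𝓝[>] (0:ℝ), c ≤ f s / s ^ (p - 1)

noncomputable def pstar (p : ℝ) (N : ℕ) : EReal :=
  if p < (N:ℝ) then (((N:ℝ) * p / ((N:ℝ) - p) : ℝ) : EReal) else ⊤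

noncomputable def fstar (f : ℝ → ℝ) (s : ℝ) : ℝ := sSup (f '' Icc 1 s)

noncomputable def Fint (f : ℝ → ℝ) (s : ℝ) : ℝ := ∫ σ in (1:ℝ)..s, f σ

def Fsubl (p : ℝ) (f : ℝ → ℝ) : Prop :=
  ∃ M : ℝ, 0 < M ∧ ∀ ε > 0, ∀ᶠ s in atTop, f s / s ^ (p - 1) ≤ M + ε

def FsubcWith (p : ℝ) (N : ℕ) (f : ℝ → ℝ) (η : ℝ) : Prop :=
  (∀ c : ℝ, ∃ᶠ s in atTop, c < f s / s ^ (p - 1)) ∧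
  0 < η ∧ η < 1 ∧
  ∃ L : ℝ, (L : EReal) < pstar p N ∧
    ∀ᶠ s in atTop, fstar f s * s / Fint f (η * s) ≤ L

def Fsubc (p : ℝ) (N : ℕ) (f : ℝ → ℝ) : Prop := ∃ η : ℝ, FsubcWith p N f η

/-- A radial solution of the Neumann problem on `[R1,R2]`. -/
def NeumannSol (p : ℝ) (N : ℕ) (R1 R2 : ℝ) (f u : ℝ → ℝ) : Prop :=
  (∀ x ∈ Icc R1 R2, DifferentiableAt ℝ u x) ∧
  ContinuousOn (deriv u) (Icc R1 R2) ∧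
  (∀ x ∈ Icc R1 R2, 0 < u x) ∧
  deriv u R1 = 0 ∧ deriv u R2 = 0 ∧
  ContinuousOn (fun x => x ^ (N - 1) * phip p (deriv u x)) (Icc R1 R2) ∧
  ∀ x ∈ Ioc R1 R2,
    HasDerivAt (fun t => t ^ (N - 1) * phip p (deriv u t)) (-(x ^ (N - 1)) * f (u x)) x

noncomputable def fhat (f : ℝ → ℝ) (s : ℝ) : ℝ := if 0 ≤ s then f s else 0

noncomputable def Fhat (f : ℝ → ℝ) (s : ℝ) : ℝ := ∫ σ in (1:ℝ)..s, fhat f σ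

/-- A solution of the Cauchy problem with datum `d`, for the nonlinearity `g`. -/
def CauchySol (p : ℝ) (N : ℕ) (R1 R2 : ℝ) (g u : ℝ → ℝ) (d : ℝ) : Prop :=
  (∀ x ∈ Icc R1 R2, DifferentiableAt ℝ u x) ∧
  ContinuousOn (deriv u) (Icc R1 R2) ∧
  u R1 = d ∧ deriv u R1 = 0 ∧
  ContinuousOn (fun x => x ^ (N - 1) * phip p (deriv u x)) (Icc R1 R2) ∧
  ∀ x ∈ Ioc R1 R2,
    HasDerivAt (fun t => t ^ (N - 1) * phip p (deriv u t)) (-(x ^ (N - 1)) * g (u x)) x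

noncomputable def rOne (R1 R2 : ℝ) (u : ℝ → ℝ) : ℝ :=
  sSup {x | x ∈ Icc R1 R2 ∧ ∀ s ∈ Ico R1 x, 0 < u s}

noncomputable def rZero (R2 η d : ℝ) (u : ℝ → ℝ) : ℝ :=
  sSup {x | x ∈ Icc 0 R2 ∧ ∀ s ∈ Ico 0 x, η * d < u s}

noncomputable def energy (p : ℝ) (f u : ℝ → ℝ) (x : ℝ) : ℝ :=
  |deriv u x| ^ p / (p / (p - 1)) + Fhat f (u x)

def NonConstOn (R1 R2 : ℝ) (u : ℝ → ℝ) : Prop :=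
  ∃ x ∈ Icc R1 R2, ∃ x' ∈ Icc R1 R2, u x ≠ u x'

def DistinctOn (R1 R2 : ℝ) (u v : ℝ → ℝ) : Prop :=
  ∃ x ∈ Icc R1 R2, u x ≠ v x

noncomputable def nOverPstar (p : ℝ) (N : ℕ) : ℝ :=
  if p < (N:ℝ) then ((N:ℝ) - p) / p else 0

lemma abs_phip {p : ℝ} (hp : 1 < p) (s : ℝ) : |phip p s| = |s| ^ (p - 1) := by
  rcases eq_or_ne s 0 with rfl | hs
  · simp [phip, Real.zero_rpow (by linarith : p - 1 ≠ 0)]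
  · rw [phip, abs_mul, abs_of_nonneg (Real.rpow_nonneg (abs_nonneg s) _),
      show p - 1 = (p - 2) + 1 by ring, Real.rpow_add_one (abs_ne_zero.2 hs)]

lemma phip_phip {p : ℝ} (hp : 1 < p) (s : ℝ) : phip (p / (p - 1)) (phip p s) = s := by
  rcases eq_or_ne s 0 with rfl | hs
  · simp [phip]
  · have h1 : (0:ℝ) < p - 1 := by linarith
    have habs : (0:ℝ) < |s| := abs_pos.2 hs
    rw [phip, abs_phip hp, ← Real.rpow_mul (abs_nonneg s), phip,
      show (p-1) * (p/(p-1) - 2) = (2 - p) by field_simp; ring]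
    rw [← mul_assoc, ← Real.rpow_add habs]
    norm_num

lemma mul_phip {p : ℝ} (hp : 1 < p) (s : ℝ) : s * phip p s = |s| ^ p := by
  rcases eq_or_ne s 0 with rfl | hs
  · simp [phip, Real.zero_rpow (by linarith : p ≠ 0)]
  · have : s * phip p s = |s| ^ (p-2) * s ^ 2 := by rw [phip]; ring
    rw [this, ← sq_abs, ← Real.rpow_two, ← Real.rpow_add (abs_pos.2 hs)]
    norm_num

lemma abs_phip_rpow {p : ℝ} (hp : 1 < p) (s : ℝ) :
    |phip p s| ^ (p / (p - 1)) = |s| ^ p := by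
  have h1 : p - 1 ≠ 0 := by linarith
  rw [abs_phip hp, ← Real.rpow_mul (abs_nonneg s),
    show (p-1)*(p/(p-1)) = p by field_simp]

lemma hasDerivAt_abs_rpow_div {q : ℝ} (hq : 1 < q) (t : ℝ) :
    HasDerivAt (fun s : ℝ => |s| ^ q / q) (phip q t) t := by
  have h := (hasDerivAt_abs_rpow t hq).div_const q
  have hq0 : q ≠ 0 := by positivity
  rw [show phip q t = q * |t| ^ (q - 2) * t / q by rw [phip, mul_assoc, mul_div_cancel_left₀ _ hq0]]
  exact h

lemma continuous_fhat {f : ℝ → ℝ} (hreg : Freg f) (heq : Feq f) : Continuous (fhat f) := by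
  have h : fhat f = fun s => f (max s 0) := by
    funext s
    unfold fhat
    split_ifs with h
    · rw [max_eq_left h]
    · rw [max_eq_right (le_of_lt (not_le.1 h)), heq.1]
  rw [h]
  exact hreg.1.comp_continuous (continuous_id.max continuous_const)
    (fun x => mem_Ici.2 (le_max_right _ _))

lemma hasDerivAt_Fhat {f : ℝ → ℝ} (hc : Continuous (fhat f)) (s : ℝ) :
    HasDerivAt (Fhat f) (fhat f s) s :=
  intervalIntegral.integral_hasDerivAt_right (hc.intervalIntegrable _ _)
    (hc.stronglyMeasurable.stronglyMeasurableAtFilter) hc.continuousAt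

lemma fhat_nonneg_of_one_le {f : ℝ → ℝ} (heq : Feq f) {s : ℝ} (hs : 1 ≤ s) :
    0 ≤ fhat f s := by
  rw [fhat, if_pos (by linarith)]
  rcases eq_or_lt_of_le hs with rfl | h
  · rw [heq.2.1]
  · exact (heq.2.2.2 s h).le

lemma fhat_nonpos_of_le_one {f : ℝ → ℝ} (heq : Feq f) {s : ℝ} (hs : s ≤ 1) :
    fhat f s ≤ 0 := by
  rw [fhat]
  split_ifs with h
  · rcases eq_or_lt_of_le h with rfl | h0
    · exact heq.1.le
    · rcases eq_or_lt_of_le hs with rfl | h1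
      · exact heq.2.1.le
      · exact (heq.2.2.1 s h0 h1).le
  · exact le_rfl

lemma Fhat_nonneg {f : ℝ → ℝ} (heq : Feq f) (hc : Continuous (fhat f)) (s : ℝ) :
    0 ≤ Fhat f s := by
  rcases le_total 1 s with h | h
  · exact intervalIntegral.integral_nonneg h
      (fun x hx => fhat_nonneg_of_one_le heq hx.1)
  · have h2 : (0:ℝ) ≤ ∫ σ in s..1, -fhat f σ :=
      intervalIntegral.integral_nonneg h (fun x hx => by
        simpa using fhat_nonpos_of_le_one heq hx.2)
    rw [intervalIntegral.integral_neg] at h2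
    rw [Fhat, intervalIntegral.integral_symm s 1]
    linarith

lemma Fhat_of_nonpos {f : ℝ → ℝ} (heq : Feq f) (hc : Continuous (fhat f)) {s : ℝ}
    (hs : s ≤ 0) : Fhat f s = Fhat f 0 := by
  have h1 : (∫ σ in (0:ℝ)..s, fhat f σ) = ∫ σ in (0:ℝ)..s, (0:ℝ) := by
    apply intervalIntegral.integral_congr
    intro x hx
    rw [uIcc_of_ge hs] at hx
    rcases eq_or_lt_of_le hx.2 with h | h
    · subst h; simp [fhat, heq.1]
    · simp [fhat, not_le.2 h]
  simp only [intervalIntegral.integral_zero] at h1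
  have h2 := intervalIntegral.integral_add_adjacent_intervals
    (hc.intervalIntegrable (μ := MeasureTheory.volume) 1 0)
    (hc.intervalIntegrable (μ := MeasureTheory.volume) 0 s)
  show (∫ σ in (1:ℝ)..s, fhat f σ) = ∫ σ in (1:ℝ)..(0:ℝ), fhat f σ
  rw [← h2, h1, add_zero]

lemma pow_div_alg (n : ℕ) (x A B : ℝ) (hx : x ≠ 0) :
    ((-(x ^ n) * A) * x ^ n - (x ^ n * B) * ((n:ℝ) * x ^ (n - 1))) / (x ^ n) ^ 2
      = -A - ((n:ℝ)/x) * B := by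
  rcases n with _ | k
  · simp
  · have h1 : k + 1 - 1 = k := rfl
    rw [h1]
    have hp : x ^ (k+1) ≠ 0 := pow_ne_zero _ hx
    push_cast
    field_simp
    ring

lemma energy_hasDerivAt {p : ℝ} (hp : 1 < p) {N : ℕ} (hN : 1 ≤ N)
    {R1 R2 : ℝ} (hR1 : 0 < R1) {f u : ℝ → ℝ} (hfc : Continuous (fhat f)) {d : ℝ}
    (hu : CauchySol p N R1 R2 (fhat f) u d) {x : ℝ} (hx : x ∈ Ioc R1 R2) :
    HasDerivAt (energy p f u) (-((((N:ℝ) - 1))/x) * |deriv u x| ^ p) x := by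
  have hp1 : (0:ℝ) < p - 1 := by linarith
  have hq : 1 < p / (p - 1) := (one_lt_div hp1).mpr (by linarith)
  have hx0 : (0:ℝ) < x := hR1.trans hx.1
  have hxIcc : x ∈ Icc R1 R2 := ⟨hx.1.le, hx.2⟩
  set n := N - 1 with hn
  have hncast : ((n:ℝ)) = (N:ℝ) - 1 := by
    rw [hn, Nat.cast_sub hN, Nat.cast_one]
  set c := deriv u x with hc
  -- derivative of w = phip p (deriv u ·)
  have hv := hu.2.2.2.2.2 x hx
  have hpow : HasDerivAt (fun t : ℝ => t ^ n) ((n:ℝ) * x ^ (n - 1)) x := hasDerivAt_pow n x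
  have hdiv : HasDerivAt (fun t : ℝ => (t ^ n * phip p (deriv u t)) / t ^ n)
      (((-(x ^ n) * fhat f (u x)) * x ^ n -
        (x ^ n * phip p c) * ((n:ℝ) * x ^ (n - 1))) / (x ^ n) ^ 2) x :=
    hv.div hpow (pow_ne_zero n hx0.ne')
  have heve : (fun t : ℝ => phip p (deriv u t)) =ᶠ[𝓝 x]
      (fun t : ℝ => (t ^ n * phip p (deriv u t)) / t ^ n) := by
    filter_upwards [eventually_gt_nhds hx0] with t ht
    field_simp
  have hwval : ((-(x ^ n) * fhat f (u x)) * x ^ n -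
        (x ^ n * phip p c) * ((n:ℝ) * x ^ (n - 1))) / (x ^ n) ^ 2
      = -fhat f (u x) - (((N:ℝ) - 1)/x) * phip p c := by
    rw [← hncast]
    exact pow_div_alg n x (fhat f (u x)) (phip p c) hx0.ne'
  have hw : HasDerivAt (fun t : ℝ => phip p (deriv u t))
      (-fhat f (u x) - (((N:ℝ) - 1)/x) * phip p c) x := by
    rw [← hwval]
    exact hdiv.congr_of_eventuallyEq heve
  -- kinetic term
  have hkin : HasDerivAt (fun t : ℝ => |phip p (deriv u t)| ^ (p/(p-1)) / (p/(p-1)))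
      (phip (p/(p-1)) (phip p c) * (-fhat f (u x) - (((N:ℝ) - 1)/x) * phip p c)) x :=
    by have h := (hasDerivAt_abs_rpow_div hq (phip p c)).comp x hw; exact h
  have hkin2 : HasDerivAt (fun t : ℝ => |deriv u t| ^ p / (p/(p-1)))
      (c * (-fhat f (u x) - (((N:ℝ) - 1)/x) * phip p c)) x := by
    have hfun : (fun t : ℝ => |phip p (deriv u t)| ^ (p/(p-1)) / (p/(p-1)))
        = (fun t : ℝ => |deriv u t| ^ p / (p/(p-1))) := by
      funext t
      rw [abs_phip_rpow hp]
    rw [← hfun]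
    have h2 := hkin
    rw [phip_phip hp c] at h2
    exact h2
  -- potential term
  have hF : HasDerivAt (fun t : ℝ => Fhat f (u t)) (fhat f (u x) * c) x :=
    (hasDerivAt_Fhat hfc (u x)).comp x ((hu.1 x hxIcc).hasDerivAt)
  have hsum := hkin2.add hF
  have hval : c * (-fhat f (u x) - (((N:ℝ) - 1)/x) * phip p c) + fhat f (u x) * c
      = -((((N:ℝ) - 1))/x) * |c| ^ p := by
    rw [← mul_phip hp c]
    ring
  rw [hval] at hsum
  exact hsum

lemma energy_lower_bound {p : ℝ} (hp : 1 < p) {N : ℕ} (hN : 1 ≤ N)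
    {R1 R2 : ℝ} (hR1 : 0 < R1) (hR12 : R1 < R2)
    {f : ℝ → ℝ} (hreg : Freg f) (heq : Feq f)
    {d : ℝ} (hd : 0 < d) {u : ℝ → ℝ} (hu : CauchySol p N R1 R2 (fhat f) u d) :
    ∀ x ∈ Icc R1 R2,
      Fhat f d * Real.exp (((N : ℝ) - 1) * (p / (p - 1)) * (R1 - R2) / R1)
        ≤ energy p f u x := by
  have hp1 : (0:ℝ) < p - 1 := by linarith
  have hp0 : (0:ℝ) < p := by linarith
  have hq0 : (0:ℝ) < p / (p - 1) := by positivity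
  have hNc : (1:ℝ) ≤ (N:ℝ) := by exact_mod_cast hN
  have hfc : Continuous (fhat f) := continuous_fhat hreg heq
  set q := p / (p - 1) with hqdef
  set K := ((N:ℝ) - 1) * q / R1 with hK
  have hK0 : 0 ≤ K := by
    apply div_nonneg _ hR1.le
    apply mul_nonneg (by linarith) hq0.le
  set G := fun t : ℝ => energy p f u t * Real.exp (K * t) with hG
  -- continuity of u and energy
  have hucont : ContinuousOn u (Icc R1 R2) := fun x hx =>
    (hu.1 x hx).continuousAt.continuousWithinAt
  have hHcont : ContinuousOn (energy p f u) (Icc R1 R2) := by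
    apply ContinuousOn.add
    · exact (hu.2.1.abs.rpow_const (fun x _ => Or.inr hp0.le)).div_const _
    · exact ((hasDerivAt_Fhat hfc · |>.differentiableAt) |> Differentiable.continuous
        |>.comp_continuousOn hucont)
  have hGcont : ContinuousOn G (Icc R1 R2) :=
    hHcont.mul ((Real.continuous_exp.comp (continuous_const.mul continuous_id)).continuousOn)
  -- derivative of G nonneg on interior
  have hGder : ∀ x ∈ Ioo R1 R2, HasDerivAt G
      (-((((N:ℝ) - 1))/x) * |deriv u x| ^ p * Real.exp (K * x)
        + energy p f u x * (Real.exp (K * x) * K)) x := by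
    intro x hx
    have hH := energy_hasDerivAt hp hN hR1 hfc hu ⟨hx.1, hx.2.le⟩
    have hexp : HasDerivAt (fun t : ℝ => Real.exp (K * t)) (Real.exp (K * x) * K) x := by
      simpa using ((hasDerivAt_id x).const_mul K).exp
    exact hH.mul hexp
  have hGnonneg : ∀ x ∈ Ioo R1 R2, 0 ≤ -((((N:ℝ) - 1))/x) * |deriv u x| ^ p * Real.exp (K * x)
        + energy p f u x * (Real.exp (K * x) * K) := by
    intro x hx
    have hx0 : (0:ℝ) < x := hR1.trans hx.1
    have hHnn : 0 ≤ energy p f u x := by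
      apply add_nonneg
      · exact div_nonneg (Real.rpow_nonneg (abs_nonneg _) _) hq0.le
      · exact Fhat_nonneg heq hfc _
    have hcp : |deriv u x| ^ p ≤ energy p f u x * q := by
      have h1 : |deriv u x| ^ p / q ≤ energy p f u x :=
        le_add_of_nonneg_right (Fhat_nonneg heq hfc _) |>.trans_eq rfl
      calc |deriv u x| ^ p = |deriv u x| ^ p / q * q := by field_simp
        _ ≤ energy p f u x * q := by
            apply mul_le_mul_of_nonneg_right _ hq0.le
            exact le_add_of_nonneg_right (Fhat_nonneg heq hfc _)
    have hmn : (((N:ℝ) - 1))/x * |deriv u x| ^ p ≤ K * energy p f u x := by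
      have h1 : (((N:ℝ) - 1))/x ≤ (((N:ℝ) - 1))/R1 :=
        div_le_div_of_nonneg_left (by linarith) hR1 hx.1.le
      have h2 : (((N:ℝ) - 1))/x * |deriv u x| ^ p ≤ (((N:ℝ) - 1))/R1 * |deriv u x| ^ p :=
        mul_le_mul_of_nonneg_right h1 (by positivity)
      have h3 : (((N:ℝ) - 1))/R1 * |deriv u x| ^ p ≤ (((N:ℝ) - 1))/R1 * (energy p f u x * q) :=
        mul_le_mul_of_nonneg_left hcp (div_nonneg (by linarith) hR1.le)
      have h4 : (((N:ℝ) - 1))/R1 * (energy p f u x * q) = K * energy p f u x := by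
        rw [hK]; ring
      linarith
    have hepos : (0:ℝ) < Real.exp (K * x) := Real.exp_pos _
    nlinarith [hepos, hmn]
  have hmono : MonotoneOn G (Icc R1 R2) := by
    apply monotoneOn_of_deriv_nonneg (convex_Icc R1 R2) hGcont
    · intro x hx
      rw [interior_Icc] at hx
      exact (hGder x hx).differentiableAt.differentiableWithinAt
    · intro x hx
      rw [interior_Icc] at hx
      rw [(hGder x hx).deriv]
      exact hGnonneg x hx
  intro x hx
  have h1 : G R1 ≤ G x := hmono (left_mem_Icc.2 hR12.le) hx hx.1
  have hHR1 : energy p f u R1 = Fhat f d := by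
    rw [energy, hu.2.2.2.1, hu.2.2.1]
    simp [Real.zero_rpow hp0.ne']
  rw [hG] at h1
  simp only [hHR1] at h1
  have hFd : 0 ≤ Fhat f d := Fhat_nonneg heq hfc d
  have hstep : Fhat f d * Real.exp (K * (R1 - x)) ≤ energy p f u x := by
    rw [show K * (R1 - x) = K * R1 - K * x by ring, Real.exp_sub, ← mul_div_assoc,
      div_le_iff₀ (Real.exp_pos _)]
    exact h1
  have hexpo : ((N : ℝ) - 1) * (p / (p - 1)) * (R1 - R2) / R1 = K * (R1 - R2) := by
    rw [hK]; ring
  rw [hexpo]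
  refine le_trans ?_ hstep
  apply mul_le_mul_of_nonneg_left _ hFd
  apply Real.exp_le_exp.2
  apply mul_le_mul_of_nonneg_left (by linarith [hx.2]) hK0

theorem stmt11 (p : ℝ) (hp : 1 < p) (N : ℕ) (hN : 1 ≤ N)
    (R1 R2 : ℝ) (hR1 : 0 < R1) (hR12 : R1 < R2)
    (f : ℝ → ℝ) (hreg : Freg f) (heq : Feq f) (h0 : Fzero p f) :
    (∀ d : ℝ, 0 < d → ∀ u : ℝ → ℝ, CauchySol p N R1 R2 (fhat f) u d →
      ∀ x ∈ Icc R1 R2,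
        Fhat f d * Real.exp (((N : ℝ) - 1) * (p / (p - 1)) * (R1 - R2) / R1) ≤ energy p f u x) ∧
    (Tendsto (Fhat f) atTop atTop →
      ∀ M : ℝ, 0 < M → ∃ D : ℝ, 0 < D ∧ ∀ d : ℝ, D ≤ d →
        ∀ u : ℝ → ℝ, CauchySol p N R1 R2 (fhat f) u d →
          ∀ x ∈ Icc R1 (rOne R1 R2 u), M ≤ u x + |deriv u x|) := by
  constructor
  · intro d hd u hu x hx
    exact energy_lower_bound hp hN hR1 hR12 hreg heq hd hu x hx
  · intro hT M hM
    have hp1 : (0:ℝ) < p - 1 := by linarith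
    have hp0 : (0:ℝ) < p := by linarith
    have hq0 : (0:ℝ) < p / (p - 1) := by positivity
    have hfc : Continuous (fhat f) := continuous_fhat hreg heq
    have hFdiff : Differentiable ℝ (Fhat f) := fun s => (hasDerivAt_Fhat hfc s).differentiableAt
    have hFcont : Continuous (Fhat f) := hFdiff.continuous
    obtain ⟨z, hz, hzmax⟩ := IsCompact.exists_isMaxOn isCompact_Icc
      (⟨0, le_refl (0:ℝ), hM.le⟩ : (Icc (0:ℝ) M).Nonempty) hFcont.continuousOn
    set C := Fhat f z with hC
    set c0 := Real.exp (((N:ℝ) - 1) * (p / (p - 1)) * (R1 - R2) / R1) with hc0def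
    have hc0 : 0 < c0 := Real.exp_pos _
    obtain ⟨D0, hD0⟩ := eventually_atTop.1
      (hT.eventually_ge_atTop ((C + M ^ p / (p / (p - 1)) + 1) / c0))
    refine ⟨max D0 1, lt_of_lt_of_le one_pos (le_max_right _ _), ?_⟩
    intro d hd u hu x hx
    have hd1 : (1:ℝ) ≤ d := le_trans (le_max_right D0 1) hd
    have hd0 : (0:ℝ) < d := by linarith
    have hucont : ContinuousOn u (Icc R1 R2) := fun y hy =>
      (hu.1 y hy).continuousAt.continuousWithinAt
    -- facts about rOne
    have hSne : R1 ∈ {x | x ∈ Icc R1 R2 ∧ ∀ s ∈ Ico R1 x, 0 < u s} :=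
      ⟨left_mem_Icc.2 hR12.le, fun s hs => absurd hs.2 (not_lt.2 hs.1)⟩
    have hbdd : BddAbove {x | x ∈ Icc R1 R2 ∧ ∀ s ∈ Ico R1 x, 0 < u s} :=
      ⟨R2, fun y hy => hy.1.2⟩
    have hr1R1 : R1 ≤ rOne R1 R2 u := le_csSup hbdd hSne
    have hr1R2 : rOne R1 R2 u ≤ R2 := csSup_le ⟨R1, hSne⟩ (fun y hy => hy.1.2)
    have hxR2 : x ∈ Icc R1 R2 := ⟨hx.1, hx.2.trans hr1R2⟩
    have hupos : ∀ s, R1 ≤ s → s < rOne R1 R2 u → 0 < u s := by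
      intro s hs1 hs2
      obtain ⟨y, hyS, hxy⟩ := exists_lt_of_lt_csSup ⟨R1, hSne⟩ hs2
      exact hyS.2 s ⟨hs1, hxy⟩
    have hunn : 0 ≤ u x := by
      rcases lt_or_eq_of_le hx.2 with h | h
      · exact (hupos x hx.1 h).le
      · rcases eq_or_lt_of_le hx.1 with h1 | h1
        · rw [← h1, hu.2.2.1]; linarith
        · have hlt : R1 < rOne R1 R2 u := h ▸ h1
          have hsub : Ico R1 (rOne R1 R2 u) ⊆ Icc R1 R2 :=
            fun y hy => ⟨hy.1, (hy.2.le.trans hr1R2)⟩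
          have hr1Icc : rOne R1 R2 u ∈ Icc R1 R2 := ⟨hr1R1, hr1R2⟩
          haveI : (𝓝[Ico R1 (rOne R1 R2 u)] (rOne R1 R2 u)).NeBot := by
            apply mem_closure_iff_nhdsWithin_neBot.1
            rw [closure_Ico hlt.ne]
            exact right_mem_Icc.2 hlt.le
          have htend : Tendsto u (𝓝[Ico R1 (rOne R1 R2 u)] (rOne R1 R2 u))
              (𝓝 (u (rOne R1 R2 u))) :=
            ((hucont _ hr1Icc).mono hsub).tendsto
          rw [h]
          exact ge_of_tendsto htend
            (eventually_mem_nhdsWithin.mono fun s hs => (hupos s hs.1 hs.2).le)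
    have hE := energy_lower_bound hp hN hR1 hR12 hreg heq hd0 hu x hxR2
    by_contra hcon
    push_neg at hcon
    have habs : |deriv u x| ≤ M := by linarith [abs_nonneg (deriv u x)]
    have huxM : u x ≤ M := by linarith [abs_nonneg (deriv u x)]
    have hE2 : energy p f u x ≤ M ^ p / (p / (p - 1)) + C := by
      have h1 : |deriv u x| ^ p ≤ M ^ p :=
        Real.rpow_le_rpow (abs_nonneg _) habs hp0.le
      have h2 : Fhat f (u x) ≤ C := hzmax ⟨hunn, huxM⟩
      have h3 : |deriv u x| ^ p / (p / (p - 1)) ≤ M ^ p / (p / (p - 1)) :=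
        (div_le_div_iff_of_pos_right hq0).2 h1
      rw [energy]
      linarith
    have hFd : (C + M ^ p / (p / (p - 1)) + 1) / c0 ≤ Fhat f d :=
      hD0 d (le_trans (le_max_left D0 1) hd)
    have hFd2 : C + M ^ p / (p / (p - 1)) + 1 ≤ Fhat f d * c0 :=
      (div_le_iff₀ hc0).1 hFd
    linarith
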